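/- Let y ∈ ℝ³ satisfy e^{y_i} + e^{y_j} > e^{y_k} for every permutation (i,j,k) of (1,2,3), and let (a₁, a₂, a₃) be the inner angles of the Euclidean triangle of edge lengths e^{y₁}, e^{y₂}, e^{y₃} with a_i opposite the edge of length e^{y_i}. Then the function g(x) = Σ_{i=1}³ (x_i y_i + Λ(x_i)) on the closed simplex {x ∈ ℝ³ : x_i ≥ 0, x₁ + x₂ + x₃ = π} attains its maximum at x = (a₁, a₂, a₃), and this is the unique maximum point: g(x) < g(a) for every x in the closed simplex with x ≠ a. -/

import Mathlib

/-- The Lobachevsky function `Λ(t) = -∫₀ᵗ log |2 sin s| ds`. -/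
noncomputable def Lob (t : ℝ) : ℝ := -∫ s in (0 : ℝ)..t, Real.log |2 * Real.sin s|

/-- The inner angle, opposite the edge of length `x i`, of the (generalized) Euclidean
triangle of edge lengths `x 0, x 1, x 2` (clamped arccos convention). -/
noncomputable def ang (i : Fin 3) (x : Fin 3 → ℝ) : ℝ :=
  Real.arccos (((x (i + 1)) ^ 2 + (x (i + 2)) ^ 2 - (x i) ^ 2) / (2 * x (i + 1) * x (i + 2)))

open Real MeasureTheory Set intervalIntegral

section Aux

lemma log_intInt_01 : IntervalIntegrable Real.log volume 0 1 := by
  have h : IntegrableOn (fun x : ℝ => -Real.log x) (Ioc (0:ℝ) 1) volume := by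
    apply integrableOn_deriv_of_nonneg (g := fun x => x - x * Real.log x)
    · exact (continuous_id.sub continuous_mul_log).continuousOn
    · intro x hx
      have hx0 : x ≠ 0 := ne_of_gt hx.1
      have : HasDerivAt (fun x : ℝ => x - x * Real.log x) (1 - (1 * Real.log x + x * x⁻¹)) x :=
        (hasDerivAt_id x).sub ((hasDerivAt_id x).mul (Real.hasDerivAt_log hx0))
      convert this using 1
      field_simp
      ring
    · intro x hx
      simpa using Real.log_nonpos (le_of_lt hx.1) (le_of_lt hx.2)
  have h2 : IntegrableOn Real.log (Ioc (0:ℝ) 1) volume := by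
    have := h.neg
    rwa [show (-fun x : ℝ => -Real.log x) = Real.log from funext fun x => by simp] at this
  rw [intervalIntegrable_iff_integrableOn_Ioc_of_le (by norm_num)]
  exact h2

lemma log_intInt_0b {b : ℝ} (hb : 0 < b) : IntervalIntegrable Real.log volume 0 b := by
  rcases le_total b 1 with h | h
  · exact log_intInt_01.mono_set (by rw [Set.uIcc_of_le hb.le, Set.uIcc_of_le zero_le_one]; exact Icc_subset_Icc le_rfl h)
  · exact log_intInt_01.trans (intervalIntegrable_log (by
      rw [Set.uIcc_of_le h]; simp))

lemma J_meas : Measurable (fun s : ℝ => Real.log |2 * Real.sin s|) := by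
  exact Real.measurable_log.comp ((measurable_const.mul Real.measurable_sin).abs)

lemma J_intInt_half : IntervalIntegrable (fun s : ℝ => Real.log |2 * Real.sin s|) volume 0 (π/2) := by
  have hπ : (0:ℝ) < π/2 := by positivity
  have hg : IntervalIntegrable (fun s : ℝ => |Real.log s| + Real.log 2) volume 0 (π/2) :=
    (log_intInt_0b hπ).abs.add (intervalIntegrable_const)
  refine hg.mono_fun (J_meas.aestronglyMeasurable) ?_
  rw [Filter.EventuallyLE, ae_restrict_iff' measurableSet_uIoc]
  refine Filter.Eventually.of_forall (fun s hs => ?_)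
  rw [Set.uIoc_of_le hπ.le] at hs
  have hs0 : 0 < s := hs.1
  have hs2 : s ≤ π/2 := hs.2
  have hsin : Real.sin s > 0 := Real.sin_pos_of_pos_of_lt_pi hs0 (lt_of_le_of_lt hs2 (by linarith [Real.pi_pos]))
  have hlow : s ≤ 2 * Real.sin s := by
    have h1 := Real.mul_le_sin hs0.le hs2
    have key : 2 * s ≤ Real.sin s * π := by
      calc 2 * s = (2/π * s) * π := by field_simp
        _ ≤ Real.sin s * π := mul_le_mul_of_nonneg_right h1 Real.pi_pos.le
    nlinarith [Real.pi_le_four, mul_le_mul_of_nonneg_left Real.pi_le_four hsin.le]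
  have habs : |2 * Real.sin s| = 2 * Real.sin s := abs_of_pos (by linarith)
  have hub : Real.log |2 * Real.sin s| ≤ Real.log 2 := by
    rw [habs]
    exact Real.log_le_log (by linarith) (by nlinarith [Real.sin_le_one s])
  have hlb : Real.log s ≤ Real.log |2 * Real.sin s| := by
    rw [habs]; exact Real.log_le_log hs0 hlow
  have hl2 : (0:ℝ) ≤ Real.log 2 := Real.log_nonneg (by norm_num)
  simp only [Real.norm_eq_abs]
  rw [abs_of_nonneg (add_nonneg (abs_nonneg _) hl2), abs_le]
  constructor
  · have : -|Real.log s| ≤ Real.log s := neg_abs_le _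
    linarith
  · linarith [abs_nonneg (Real.log s)]

lemma J_intInt_pi : IntervalIntegrable (fun s : ℝ => Real.log |2 * Real.sin s|) volume 0 π := by
  refine J_intInt_half.trans ?_
  have h := J_intInt_half.comp_sub_left π
  have heq : (fun x : ℝ => Real.log |2 * Real.sin (π - x)|) = (fun s : ℝ => Real.log |2 * Real.sin s|) := by
    funext x; rw [Real.sin_pi_sub]
  rw [heq] at h
  have h2 : π - (0:ℝ) = π := by ring
  have h3 : π - π/2 = π/2 := by ring
  rw [h2, h3] at h
  exact h.symm

lemma J_intInt {t : ℝ} (h0 : 0 ≤ t) (hπ : t ≤ π) :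
    IntervalIntegrable (fun s : ℝ => Real.log |2 * Real.sin s|) volume 0 t :=
  J_intInt_pi.mono_set (by rw [Set.uIcc_of_le h0, Set.uIcc_of_le Real.pi_pos.le]; exact Icc_subset_Icc le_rfl hπ)

lemma Lob_hasDerivAt {t : ℝ} (h0 : 0 < t) (hπ : t < π) :
    HasDerivAt Lob (-(Real.log 2 + Real.log (Real.sin t))) t := by
  have hsin : 0 < Real.sin t := Real.sin_pos_of_pos_of_lt_pi h0 hπ
  have hcont : ContinuousAt (fun s : ℝ => Real.log |2 * Real.sin s|) t := by
    apply ContinuousAt.log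
    · exact ((continuous_const.mul Real.continuous_sin).abs).continuousAt
    · simp only [abs_ne_zero]
      positivity
  have h := intervalIntegral.integral_hasDerivAt_right (J_intInt h0.le hπ.le)
    (J_meas.stronglyMeasurable.stronglyMeasurableAtFilter) hcont
  have h2 := h.neg
  have h3 : HasDerivAt Lob (-Real.log |2 * Real.sin t|) t := h2
  rw [abs_of_pos (by positivity : (0:ℝ) < 2 * Real.sin t), Real.log_mul (by norm_num) (ne_of_gt hsin)] at h3
  exact h3

lemma Lob_continuousOn : ContinuousOn Lob (Icc 0 π) := by
  have h := intervalIntegral.continuousOn_primitive_interval'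
    (J_intInt_pi) (left_mem_uIcc (a := (0:ℝ)) (b := π))
  rw [Set.uIcc_of_le Real.pi_pos.le] at h
  exact h.neg

lemma quad_pos {θ₁ θ₂ θ₃ v₁ v₂ v₃ : ℝ}
    (h1 : 0 < θ₁) (h1' : θ₁ < π) (h2 : 0 < θ₂) (h2' : θ₂ < π) (h3 : 0 < θ₃) (h3' : θ₃ < π)
    (hsum : θ₁ + θ₂ + θ₃ = π) (hv : v₁ + v₂ + v₃ = 0) (hv0 : ¬(v₁ = 0 ∧ v₂ = 0)) :
    0 < v₁ ^ 2 * (Real.cos θ₁ / Real.sin θ₁) + v₂ ^ 2 * (Real.cos θ₂ / Real.sin θ₂)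
      + v₃ ^ 2 * (Real.cos θ₃ / Real.sin θ₃) := by
  have hs1 : 0 < Real.sin θ₁ := Real.sin_pos_of_pos_of_lt_pi h1 h1'
  have hs2 : 0 < Real.sin θ₂ := Real.sin_pos_of_pos_of_lt_pi h2 h2'
  have hs3 : 0 < Real.sin θ₃ := Real.sin_pos_of_pos_of_lt_pi h3 h3'
  have e1 : Real.sin θ₂ = Real.cos θ₁ * Real.sin θ₃ + Real.cos θ₃ * Real.sin θ₁ := by
    have h : θ₂ = π - (θ₁ + θ₃) := by linarith
    rw [h, Real.sin_pi_sub, Real.sin_add]; ring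
  have e2 : Real.sin θ₁ = Real.cos θ₂ * Real.sin θ₃ + Real.cos θ₃ * Real.sin θ₂ := by
    have h : θ₁ = π - (θ₂ + θ₃) := by linarith
    rw [h, Real.sin_pi_sub, Real.sin_add]; ring
  have hpyth : Real.cos θ₃ ^ 2 + Real.sin θ₃ ^ 2 = 1 := by
    rw [add_comm]; exact Real.sin_sq_add_cos_sq θ₃
  have hc3a : 0 < 1 + Real.cos θ₃ := by nlinarith
  have hc3b : 0 < 1 - Real.cos θ₃ := by nlinarith
  have hv3 : v₃ = -(v₁ + v₂) := by linarith
  have hAB : Real.sin θ₂ * v₁ + Real.sin θ₁ * v₂ ≠ 0 ∨ Real.sin θ₂ * v₁ - Real.sin θ₁ * v₂ ≠ 0 := by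
    by_contra hc
    push_neg at hc
    obtain ⟨hA, hB⟩ := hc
    apply hv0
    constructor
    · have : Real.sin θ₂ * v₁ = 0 := by linarith
      exact (mul_eq_zero.mp this).resolve_left (ne_of_gt hs2)
    · have : Real.sin θ₁ * v₂ = 0 := by linarith
      exact (mul_eq_zero.mp this).resolve_left (ne_of_gt hs1)
  have key : 0 < v₁ ^ 2 * Real.cos θ₁ * Real.sin θ₂ * Real.sin θ₃
      + v₂ ^ 2 * Real.cos θ₂ * Real.sin θ₁ * Real.sin θ₃
      + v₃ ^ 2 * Real.cos θ₃ * Real.sin θ₁ * Real.sin θ₂ := by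
    have hQ : v₁ ^ 2 * Real.cos θ₁ * Real.sin θ₂ * Real.sin θ₃
        + v₂ ^ 2 * Real.cos θ₂ * Real.sin θ₁ * Real.sin θ₃
        + v₃ ^ 2 * Real.cos θ₃ * Real.sin θ₁ * Real.sin θ₂
        = ((1 + Real.cos θ₃) * (Real.sin θ₂ * v₁ + Real.sin θ₁ * v₂) ^ 2
          + (1 - Real.cos θ₃) * (Real.sin θ₂ * v₁ - Real.sin θ₁ * v₂) ^ 2) / 2 := by
      rw [hv3]
      linear_combination (-(v₁ ^ 2 * Real.sin θ₂)) * e1 + (-(v₂ ^ 2 * Real.sin θ₁)) * e2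
    rw [hQ]
    rcases hAB with h | h
    · have p1 : 0 < (1 + Real.cos θ₃) * (Real.sin θ₂ * v₁ + Real.sin θ₁ * v₂) ^ 2 := by positivity
      have p2 : 0 ≤ (1 - Real.cos θ₃) * (Real.sin θ₂ * v₁ - Real.sin θ₁ * v₂) ^ 2 := by positivity
      linarith
    · have p1 : 0 ≤ (1 + Real.cos θ₃) * (Real.sin θ₂ * v₁ + Real.sin θ₁ * v₂) ^ 2 := by positivity
      have p2 : 0 < (1 - Real.cos θ₃) * (Real.sin θ₂ * v₁ - Real.sin θ₁ * v₂) ^ 2 := by positivity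
      linarith
  have expand : v₁ ^ 2 * (Real.cos θ₁ / Real.sin θ₁) + v₂ ^ 2 * (Real.cos θ₂ / Real.sin θ₂)
      + v₃ ^ 2 * (Real.cos θ₃ / Real.sin θ₃)
      = (v₁ ^ 2 * Real.cos θ₁ * Real.sin θ₂ * Real.sin θ₃
        + v₂ ^ 2 * Real.cos θ₂ * Real.sin θ₁ * Real.sin θ₃
        + v₃ ^ 2 * Real.cos θ₃ * Real.sin θ₁ * Real.sin θ₂)
        / (Real.sin θ₁ * Real.sin θ₂ * Real.sin θ₃) := by
    field_simp
  rw [expand]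
  exact div_pos key (by positivity)

lemma tri_aux {p q r : ℝ} (hp : 0 < p) (hq : 0 < q) (hr : 0 < r)
    (t1 : p < q + r) (t2 : q < p + r) (t3 : r < p + q) :
    0 < Real.arccos ((q^2+r^2-p^2)/(2*q*r)) ∧ Real.arccos ((q^2+r^2-p^2)/(2*q*r)) < π ∧
    Real.sin (Real.arccos ((q^2+r^2-p^2)/(2*q*r))) * (2*q*r)
      = Real.sqrt ((p+q+r)*(-p+q+r)*(p-q+r)*(p+q-r)) ∧
    Real.cos (Real.arccos ((q^2+r^2-p^2)/(2*q*r))) = (q^2+r^2-p^2)/(2*q*r) := by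
  have hd : (0:ℝ) < 2*q*r := by positivity
  have hlt : (q^2+r^2-p^2)/(2*q*r) < 1 := by
    rw [div_lt_one hd]
    nlinarith [mul_pos (show (0:ℝ) < p - q + r by linarith) (show (0:ℝ) < p + q - r by linarith)]
  have hgt : -1 < (q^2+r^2-p^2)/(2*q*r) := by
    rw [lt_div_iff₀ hd]
    nlinarith [mul_pos (show (0:ℝ) < q + r - p by linarith) (show (0:ℝ) < p + q + r by positivity)]
  have hpi : Real.arccos ((q^2+r^2-p^2)/(2*q*r)) < π := by
    rcases lt_or_eq_of_le (Real.arccos_le_pi ((q^2+r^2-p^2)/(2*q*r))) with h | h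
    · exact h
    · exfalso
      have := Real.cos_arccos hgt.le hlt.le
      rw [h, Real.cos_pi] at this
      linarith
  refine ⟨Real.arccos_pos.mpr hlt, hpi, ?_, Real.cos_arccos hgt.le hlt.le⟩
  rw [Real.sin_arccos]
  have h1c : (0:ℝ) ≤ 1 - ((q^2+r^2-p^2)/(2*q*r))^2 := by nlinarith
  have hstep : Real.sqrt (1 - ((q^2+r^2-p^2)/(2*q*r))^2) * (2*q*r)
      = Real.sqrt ((1 - ((q^2+r^2-p^2)/(2*q*r))^2) * (2*q*r)^2) := by
    rw [Real.sqrt_mul h1c, Real.sqrt_sq hd.le]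
  rw [hstep]
  congr 1
  field_simp
  ring

lemma tri_main {p q r : ℝ} (hp : 0 < p) (hq : 0 < q) (hr : 0 < r)
    (t1 : p < q + r) (t2 : q < p + r) (t3 : r < p + q) :
    ∃ d : ℝ,
      0 < Real.arccos ((q^2+r^2-p^2)/(2*q*r)) ∧ Real.arccos ((q^2+r^2-p^2)/(2*q*r)) < π ∧
      0 < Real.arccos ((r^2+p^2-q^2)/(2*r*p)) ∧ Real.arccos ((r^2+p^2-q^2)/(2*r*p)) < π ∧
      0 < Real.arccos ((p^2+q^2-r^2)/(2*p*q)) ∧ Real.arccos ((p^2+q^2-r^2)/(2*p*q)) < π ∧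
      Real.arccos ((q^2+r^2-p^2)/(2*q*r)) + Real.arccos ((r^2+p^2-q^2)/(2*r*p))
        + Real.arccos ((p^2+q^2-r^2)/(2*p*q)) = π ∧
      0 < d ∧
      p = d * Real.sin (Real.arccos ((q^2+r^2-p^2)/(2*q*r))) ∧
      q = d * Real.sin (Real.arccos ((r^2+p^2-q^2)/(2*r*p))) ∧
      r = d * Real.sin (Real.arccos ((p^2+q^2-r^2)/(2*p*q))) := by
  obtain ⟨h0p, h0π, h0s, h0c⟩ := tri_aux hp hq hr t1 t2 t3
  obtain ⟨h1p, h1π, h1s, h1c⟩ := tri_aux hq hr hp (by linarith) (by linarith) (by linarith)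
  obtain ⟨h2p, h2π, h2s, h2c⟩ := tri_aux hr hp hq (by linarith) (by linarith) (by linarith)
  set a₀ := Real.arccos ((q^2+r^2-p^2)/(2*q*r)) with ha₀
  set a₁ := Real.arccos ((r^2+p^2-q^2)/(2*r*p)) with ha₁
  set a₂ := Real.arccos ((p^2+q^2-r^2)/(2*p*q)) with ha₂
  have hS : (0:ℝ) < (p+q+r)*(-p+q+r)*(p-q+r)*(p+q-r) :=
    mul_pos (mul_pos (mul_pos (by linarith) (by linarith)) (by linarith)) (by linarith)
  set s := Real.sqrt ((p+q+r)*(-p+q+r)*(p-q+r)*(p+q-r)) with hsdef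
  have hs : 0 < s := Real.sqrt_pos.mpr hS
  have h1s' : Real.sin a₁ * (2*r*p) = s := by
    rw [h1s, hsdef]; congr 1; ring
  have h2s' : Real.sin a₂ * (2*p*q) = s := by
    rw [h2s, hsdef]; congr 1; ring
  have hsin₀ : Real.sin a₀ = s / (2*q*r) := by
    rw [eq_div_iff (by positivity : (2:ℝ)*q*r ≠ 0)]; exact h0s
  have hsin₁ : Real.sin a₁ = s / (2*r*p) := by
    rw [eq_div_iff (by positivity : (2:ℝ)*r*p ≠ 0)]; exact h1s'
  have hsin₂ : Real.sin a₂ = s / (2*p*q) := by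
    rw [eq_div_iff (by positivity : (2:ℝ)*p*q ≠ 0)]; exact h2s'
  have hsin2pos : 0 < Real.sin a₂ := Real.sin_pos_of_pos_of_lt_pi h2p h2π
  have hsinsum : Real.sin (a₀ + a₁) = Real.sin a₂ := by
    rw [Real.sin_add, hsin₀, hsin₁, hsin₂, h0c, h1c]
    field_simp
    ring
  have hprod : Real.sin a₀ * Real.sin a₁
      = ((p+q+r)*(-p+q+r)*(p-q+r)*(p+q-r)) / ((2*q*r)*(2*r*p)) := by
    rw [hsin₀, hsin₁, div_mul_div_comm]
    congr 1
    exact Real.mul_self_sqrt hS.le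
  have hcossum : Real.cos (a₀ + a₁) = -Real.cos a₂ := by
    rw [Real.cos_add, hprod, h0c, h1c, h2c]
    field_simp
    ring
  have hsumlt : a₀ + a₁ < π := by
    by_contra hcon
    push_neg at hcon
    have : 0 ≤ Real.sin (a₀ + a₁ - π) := Real.sin_nonneg_of_nonneg_of_le_pi (by linarith) (by linarith)
    rw [Real.sin_sub_pi] at this
    rw [hsinsum] at this
    linarith
  have hc2 : Real.cos (a₀ + a₁) = Real.cos (π - a₂) := by
    rw [Real.cos_pi_sub, hcossum]
  have heq : a₀ + a₁ = π - a₂ :=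
    Real.injOn_cos ⟨by positivity, hsumlt.le⟩ ⟨by linarith, by linarith⟩ hc2
  refine ⟨2*p*q*r/s, h0p, h0π, h1p, h1π, h2p, h2π, by linarith, by positivity, ?_, ?_, ?_⟩
  · rw [hsin₀]; field_simp; try ring
  · rw [hsin₁]; field_simp; try ring
  · rw [hsin₂]; field_simp; try ring

lemma seg_mem {a x t : ℝ} (ha0 : 0 < a) (haπ : a < π) (hx0 : 0 ≤ x) (hxπ : x ≤ π)
    (ht0 : 0 ≤ t) (ht1 : t ≤ 1) : 0 ≤ a + t * (x - a) ∧ a + t * (x - a) ≤ π := by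
  constructor <;> nlinarith

lemma seg_mem' {a x t : ℝ} (ha0 : 0 < a) (haπ : a < π) (hx0 : 0 ≤ x) (hxπ : x ≤ π)
    (ht0 : 0 ≤ t) (ht1 : t < 1) : 0 < a + t * (x - a) ∧ a + t * (x - a) < π := by
  constructor <;> nlinarith

end Aux

theorem stmt19 (y : Fin 3 → ℝ)
    (htri : ∀ i j k : Fin 3, i ≠ j → j ≠ k → i ≠ k →
      Real.exp (y k) < Real.exp (y i) + Real.exp (y j)) :
    ((∀ i, 0 ≤ ang i (fun m => Real.exp (y m))) ∧
      ang 0 (fun m => Real.exp (y m)) + ang 1 (fun m => Real.exp (y m)) +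
        ang 2 (fun m => Real.exp (y m)) = Real.pi) ∧
    ∀ x : Fin 3 → ℝ, (∀ i, 0 ≤ x i) → x 0 + x 1 + x 2 = Real.pi →
      x ≠ (fun i => ang i (fun m => Real.exp (y m))) →
      ∑ i : Fin 3, (x i * y i + Lob (x i)) <
        ∑ i : Fin 3, (ang i (fun m => Real.exp (y m)) * y i +
          Lob (ang i (fun m => Real.exp (y m)))) := by
  set E : Fin 3 → ℝ := fun m => Real.exp (y m) with hE
  have hp : 0 < E 0 := Real.exp_pos _
  have hq : 0 < E 1 := Real.exp_pos _
  have hr : 0 < E 2 := Real.exp_pos _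
  have t1 : E 0 < E 1 + E 2 := htri 1 2 0 (by decide) (by decide) (by decide)
  have t2 : E 1 < E 0 + E 2 := htri 0 2 1 (by decide) (by decide) (by decide)
  have t3 : E 2 < E 0 + E 1 := htri 0 1 2 (by decide) (by decide) (by decide)
  obtain ⟨d, h0p, h0π, h1p, h1π, h2p, h2π, hsum, hd, hp0, hq0, hr0⟩ :=
    tri_main hp hq hr t1 t2 t3
  have e0 : ang 0 E = Real.arccos ((E 1^2 + E 2^2 - E 0^2)/(2 * E 1 * E 2)) := rfl
  have e1 : ang 1 E = Real.arccos ((E 2^2 + E 0^2 - E 1^2)/(2 * E 2 * E 0)) := rfl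
  have e2 : ang 2 E = Real.arccos ((E 0^2 + E 1^2 - E 2^2)/(2 * E 0 * E 1)) := rfl
  rw [← e0] at h0p h0π hp0
  rw [← e1] at h1p h1π hq0
  rw [← e2] at h2p h2π hr0
  rw [← e0, ← e1, ← e2] at hsum
  refine ⟨⟨fun i => Real.arccos_nonneg _, hsum⟩, ?_⟩
  intro x hx0 hxsum hxne
  rw [Fin.sum_univ_three, Fin.sum_univ_three]
  -- abbreviations
  set A0 := ang 0 E with hA0d
  set A1 := ang 1 E with hA1d
  set A2 := ang 2 E with hA2d
  have hs0 : 0 < Real.sin A0 := Real.sin_pos_of_pos_of_lt_pi h0p h0π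
  have hs1 : 0 < Real.sin A1 := Real.sin_pos_of_pos_of_lt_pi h1p h1π
  have hs2 : 0 < Real.sin A2 := Real.sin_pos_of_pos_of_lt_pi h2p h2π
  have hy0 : y 0 = Real.log d + Real.log (Real.sin A0) := by
    have h := congrArg Real.log hp0
    rwa [show E 0 = Real.exp (y 0) from rfl, Real.log_exp,
      Real.log_mul (ne_of_gt hd) (ne_of_gt hs0)] at h
  have hy1 : y 1 = Real.log d + Real.log (Real.sin A1) := by
    have h := congrArg Real.log hq0
    rwa [show E 1 = Real.exp (y 1) from rfl, Real.log_exp,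
      Real.log_mul (ne_of_gt hd) (ne_of_gt hs1)] at h
  have hy2 : y 2 = Real.log d + Real.log (Real.sin A2) := by
    have h := congrArg Real.log hr0
    rwa [show E 2 = Real.exp (y 2) from rfl, Real.log_exp,
      Real.log_mul (ne_of_gt hd) (ne_of_gt hs2)] at h
  set v0 := x 0 - A0 with hv0d
  set v1 := x 1 - A1 with hv1d
  set v2 := x 2 - A2 with hv2d
  have hvsum : v0 + v1 + v2 = 0 := by rw [hv0d, hv1d, hv2d]; linarith
  have hvne : ¬(v0 = 0 ∧ v1 = 0) := by
    rintro ⟨h01, h02⟩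
    have h03 : v2 = 0 := by linarith
    apply hxne
    funext i
    have hx0e : x 0 = ang 0 E := by rw [← hA0d]; rw [hv0d] at h01; linarith
    have hx1e : x 1 = ang 1 E := by rw [← hA1d]; rw [hv1d] at h02; linarith
    have hx2e : x 2 = ang 2 E := by rw [← hA2d]; rw [hv2d] at h03; linarith
    fin_cases i
    · exact hx0e
    · exact hx1e
    · exact hx2e
  have hxπ0 : x 0 ≤ π := by have := hx0 1; have := hx0 2; linarith
  have hxπ1 : x 1 ≤ π := by have := hx0 0; have := hx0 2; linarith
  have hxπ2 : x 2 ≤ π := by have := hx0 0; have := hx0 1; linarith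
  -- the function φ
  set φ : ℝ → ℝ := fun t => (A0 + t * v0) * y 0 + Lob (A0 + t * v0)
      + ((A1 + t * v1) * y 1 + Lob (A1 + t * v1))
      + ((A2 + t * v2) * y 2 + Lob (A2 + t * v2)) with hφdef
  -- continuity of φ on [0,1]
  have hφcont : ContinuousOn φ (Icc 0 1) := by
    have caff0 : Continuous (fun t : ℝ => A0 + t * v0) :=
      continuous_const.add (continuous_id.mul continuous_const)
    have caff1 : Continuous (fun t : ℝ => A1 + t * v1) :=
      continuous_const.add (continuous_id.mul continuous_const)
    have caff2 : Continuous (fun t : ℝ => A2 + t * v2) :=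
      continuous_const.add (continuous_id.mul continuous_const)
    have m0 : MapsTo (fun t : ℝ => A0 + t * v0) (Icc 0 1) (Icc 0 π) := by
      intro t ht
      have := seg_mem h0p h0π (hx0 0) hxπ0 ht.1 ht.2
      rw [← hv0d] at this
      exact this
    have m1 : MapsTo (fun t : ℝ => A1 + t * v1) (Icc 0 1) (Icc 0 π) := by
      intro t ht
      have := seg_mem h1p h1π (hx0 1) hxπ1 ht.1 ht.2
      rw [← hv1d] at this
      exact this
    have m2 : MapsTo (fun t : ℝ => A2 + t * v2) (Icc 0 1) (Icc 0 π) := by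
      intro t ht
      have := seg_mem h2p h2π (hx0 2) hxπ2 ht.1 ht.2
      rw [← hv2d] at this
      exact this
    rw [hφdef]
    exact (((caff0.mul continuous_const).continuousOn.add
        (Lob_continuousOn.comp caff0.continuousOn m0)).add
      ((caff1.mul continuous_const).continuousOn.add
        (Lob_continuousOn.comp caff1.continuousOn m1))).add
      ((caff2.mul continuous_const).continuousOn.add
        (Lob_continuousOn.comp caff2.continuousOn m2))
  -- strict negativity of derivative
  have hφderiv : ∀ t ∈ Set.Ioo (0:ℝ) 1, deriv φ t < 0 := by
    intro t ht
    have hb0 := seg_mem' h0p h0π (hx0 0) hxπ0 ht.1.le ht.2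
    have hb1 := seg_mem' h1p h1π (hx0 1) hxπ1 ht.1.le ht.2
    have hb2 := seg_mem' h2p h2π (hx0 2) hxπ2 ht.1.le ht.2
    rw [← hv0d] at hb0; rw [← hv1d] at hb1; rw [← hv2d] at hb2
    have haff0 : HasDerivAt (fun u : ℝ => A0 + u * v0) v0 t := by
      simpa using ((hasDerivAt_id t).mul_const v0).const_add A0
    have haff1 : HasDerivAt (fun u : ℝ => A1 + u * v1) v1 t := by
      simpa using ((hasDerivAt_id t).mul_const v1).const_add A1
    have haff2 : HasDerivAt (fun u : ℝ => A2 + u * v2) v2 t := by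
      simpa using ((hasDerivAt_id t).mul_const v2).const_add A2
    have hL0 : HasDerivAt (fun u : ℝ => Lob (A0 + u * v0))
        (-(Real.log 2 + Real.log (Real.sin (A0 + t * v0))) * v0) t :=
      by have := (Lob_hasDerivAt hb0.1 hb0.2).comp t haff0; exact this
    have hL1 : HasDerivAt (fun u : ℝ => Lob (A1 + u * v1))
        (-(Real.log 2 + Real.log (Real.sin (A1 + t * v1))) * v1) t :=
      by have := (Lob_hasDerivAt hb1.1 hb1.2).comp t haff1; exact this
    have hL2 : HasDerivAt (fun u : ℝ => Lob (A2 + u * v2))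
        (-(Real.log 2 + Real.log (Real.sin (A2 + t * v2))) * v2) t :=
      by have := (Lob_hasDerivAt hb2.1 hb2.2).comp t haff2; exact this
    have hlin0 : HasDerivAt (fun u : ℝ => (A0 + u * v0) * y 0) (v0 * y 0) t := by
      simpa using haff0.mul_const (y 0)
    have hlin1 : HasDerivAt (fun u : ℝ => (A1 + u * v1) * y 1) (v1 * y 1) t := by
      simpa using haff1.mul_const (y 1)
    have hlin2 : HasDerivAt (fun u : ℝ => (A2 + u * v2) * y 2) (v2 * y 2) t := by
      simpa using haff2.mul_const (y 2)
    have hφ : HasDerivAt φ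
        (v0 * y 0 + -(Real.log 2 + Real.log (Real.sin (A0 + t * v0))) * v0
          + (v1 * y 1 + -(Real.log 2 + Real.log (Real.sin (A1 + t * v1))) * v1)
          + (v2 * y 2 + -(Real.log 2 + Real.log (Real.sin (A2 + t * v2))) * v2)) t := by
      rw [hφdef]
      exact ((hlin0.add hL0).add (hlin1.add hL1)).add (hlin2.add hL2)
    -- ψ strictly increasing
    have hψlt : v0 * Real.log (Real.sin A0) + v1 * Real.log (Real.sin A1)
        + v2 * Real.log (Real.sin A2)
        < v0 * Real.log (Real.sin (A0 + t * v0)) + v1 * Real.log (Real.sin (A1 + t * v1))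
        + v2 * Real.log (Real.sin (A2 + t * v2)) := by
      set ψ : ℝ → ℝ := fun u => v0 * Real.log (Real.sin (A0 + u * v0))
          + v1 * Real.log (Real.sin (A1 + u * v1)) + v2 * Real.log (Real.sin (A2 + u * v2)) with hψdef
      have hψd : ∀ u, 0 ≤ u → u < 1 → HasDerivAt ψ
          (v0 ^ 2 * (Real.cos (A0 + u * v0) / Real.sin (A0 + u * v0))
          + v1 ^ 2 * (Real.cos (A1 + u * v1) / Real.sin (A1 + u * v1))
          + v2 ^ 2 * (Real.cos (A2 + u * v2) / Real.sin (A2 + u * v2))) u := by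
        intro u hu0 hu1
        have hc0 := seg_mem' h0p h0π (hx0 0) hxπ0 hu0 hu1
        have hc1 := seg_mem' h1p h1π (hx0 1) hxπ1 hu0 hu1
        have hc2' := seg_mem' h2p h2π (hx0 2) hxπ2 hu0 hu1
        rw [← hv0d] at hc0; rw [← hv1d] at hc1; rw [← hv2d] at hc2'
        have hsc0 : Real.sin (A0 + u * v0) ≠ 0 :=
          ne_of_gt (Real.sin_pos_of_pos_of_lt_pi hc0.1 hc0.2)
        have hsc1 : Real.sin (A1 + u * v1) ≠ 0 :=
          ne_of_gt (Real.sin_pos_of_pos_of_lt_pi hc1.1 hc1.2)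
        have hsc2 : Real.sin (A2 + u * v2) ≠ 0 :=
          ne_of_gt (Real.sin_pos_of_pos_of_lt_pi hc2'.1 hc2'.2)
        have ha0 : HasDerivAt (fun w : ℝ => A0 + w * v0) v0 u := by
          simpa using ((hasDerivAt_id u).mul_const v0).const_add A0
        have ha1 : HasDerivAt (fun w : ℝ => A1 + w * v1) v1 u := by
          simpa using ((hasDerivAt_id u).mul_const v1).const_add A1
        have ha2 : HasDerivAt (fun w : ℝ => A2 + w * v2) v2 u := by
          simpa using ((hasDerivAt_id u).mul_const v2).const_add A2
        have hd0 : HasDerivAt (fun w : ℝ => v0 * Real.log (Real.sin (A0 + w * v0)))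
            (v0 * ((Real.sin (A0 + u * v0))⁻¹ * (Real.cos (A0 + u * v0) * v0))) u :=
          by have := (((Real.hasDerivAt_log hsc0).comp u
            ((Real.hasDerivAt_sin (A0 + u * v0)).comp u ha0))).const_mul v0; exact this
        have hd1 : HasDerivAt (fun w : ℝ => v1 * Real.log (Real.sin (A1 + w * v1)))
            (v1 * ((Real.sin (A1 + u * v1))⁻¹ * (Real.cos (A1 + u * v1) * v1))) u :=
          by have := (((Real.hasDerivAt_log hsc1).comp u
            ((Real.hasDerivAt_sin (A1 + u * v1)).comp u ha1))).const_mul v1; exact this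
        have hd2 : HasDerivAt (fun w : ℝ => v2 * Real.log (Real.sin (A2 + w * v2)))
            (v2 * ((Real.sin (A2 + u * v2))⁻¹ * (Real.cos (A2 + u * v2) * v2))) u :=
          by have := (((Real.hasDerivAt_log hsc2).comp u
            ((Real.hasDerivAt_sin (A2 + u * v2)).comp u ha2))).const_mul v2; exact this
        have := (hd0.add hd1).add hd2
        rw [hψdef]
        exact this.congr_deriv (by ring)
      have hmono : StrictMonoOn ψ (Icc 0 t) := by
        apply strictMonoOn_of_deriv_pos (convex_Icc 0 t)
        · intro u hu
          exact (hψd u hu.1 (lt_of_le_of_lt hu.2 ht.2)).continuousAt.continuousWithinAt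
        · intro u hu
          rw [interior_Icc] at hu
          have hder := hψd u hu.1.le (lt_trans hu.2 ht.2)
          rw [hder.deriv]
          have hc0 := seg_mem' h0p h0π (hx0 0) hxπ0 hu.1.le (lt_trans hu.2 ht.2)
          have hc1 := seg_mem' h1p h1π (hx0 1) hxπ1 hu.1.le (lt_trans hu.2 ht.2)
          have hc2' := seg_mem' h2p h2π (hx0 2) hxπ2 hu.1.le (lt_trans hu.2 ht.2)
          rw [← hv0d] at hc0; rw [← hv1d] at hc1; rw [← hv2d] at hc2'
          exact quad_pos hc0.1 hc0.2 hc1.1 hc1.2 hc2'.1 hc2'.2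
            (by linear_combination hsum + u * hvsum) hvsum hvne
      have h0m : (0:ℝ) ∈ Icc (0:ℝ) t := ⟨le_rfl, ht.1.le⟩
      have htm : t ∈ Icc (0:ℝ) t := ⟨ht.1.le, le_rfl⟩
      have h := hmono h0m htm ht.1
      rw [hψdef] at h
      simpa using h
    have hDneg : v0 * y 0 + -(Real.log 2 + Real.log (Real.sin (A0 + t * v0))) * v0
          + (v1 * y 1 + -(Real.log 2 + Real.log (Real.sin (A1 + t * v1))) * v1)
          + (v2 * y 2 + -(Real.log 2 + Real.log (Real.sin (A2 + t * v2))) * v2) < 0 := by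
      have hDeq : v0 * y 0 + -(Real.log 2 + Real.log (Real.sin (A0 + t * v0))) * v0
          + (v1 * y 1 + -(Real.log 2 + Real.log (Real.sin (A1 + t * v1))) * v1)
          + (v2 * y 2 + -(Real.log 2 + Real.log (Real.sin (A2 + t * v2))) * v2)
          = (v0 * Real.log (Real.sin A0) + v1 * Real.log (Real.sin A1)
              + v2 * Real.log (Real.sin A2))
            - (v0 * Real.log (Real.sin (A0 + t * v0)) + v1 * Real.log (Real.sin (A1 + t * v1))
              + v2 * Real.log (Real.sin (A2 + t * v2))) := by
        linear_combination v0 * hy0 + v1 * hy1 + v2 * hy2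
          + (Real.log d - Real.log 2) * hvsum
      rw [hDeq]
      linarith [hψlt]
    rw [hφ.deriv]
    exact hDneg
  have hanti : StrictAntiOn φ (Icc 0 1) := by
    apply strictAntiOn_of_deriv_neg (convex_Icc 0 1) hφcont
    intro t ht
    rw [interior_Icc] at ht
    exact hφderiv t ht
  have hlt := hanti ⟨le_refl 0, zero_le_one⟩ ⟨zero_le_one, le_refl 1⟩ zero_lt_one
  have hφ1 : φ 1 = x 0 * y 0 + Lob (x 0) + (x 1 * y 1 + Lob (x 1)) + (x 2 * y 2 + Lob (x 2)) := by
    rw [hφdef]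
    simp only
    rw [hv0d, hv1d, hv2d]
    rw [show A0 + 1 * (x 0 - A0) = x 0 by ring, show A1 + 1 * (x 1 - A1) = x 1 by ring,
      show A2 + 1 * (x 2 - A2) = x 2 by ring]
  have hφ0 : φ 0 = A0 * y 0 + Lob A0 + (A1 * y 1 + Lob A1) + (A2 * y 2 + Lob A2) := by
    rw [hφdef]
    simp only
    rw [show A0 + 0 * v0 = A0 by ring, show A1 + 0 * v1 = A1 by ring,
      show A2 + 0 * v2 = A2 by ring]
  rw [← hφ1, ← hφ0]
  exact hlt
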